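/- The second-moment matrix of (X, W_1, W_2) equals the second-moment matrix of (X, U_1, U_2). Explicitly: E[W_1] = E[W_2] = 0, E[X·W_1] = E[X·W_2] = σ², E[W_1²] = σ² + s0 + s1, E[W_2²] = σ² + s0 + s2, and E[W_1·W_2] = σ² + s0 − σT1·σT2. -/

import Mathlib

open MeasureTheory ProbabilityTheory

set_option maxHeartbeats 2000000 in
/-- Successive quantization via ECDQ (additive-noise model): the second-moment matrix of
`(X, W₁, W₂)` equals that of the Gaussian MD test channel `(X, U₁, U₂)`. Explicitly:
`E[W₁] = E[W₂] = 0`, `E[X·W₁] = E[X·W₂] = σ²`, `E[W₁²] = σ² + s0 + s1`,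
`E[W₂²] = σ² + s0 + s2`, and `E[W₁·W₂] = σ² + s0 − σT1·σT2`. -/
theorem successive_quantization_second_moments
    {Ω : Type*} [MeasurableSpace Ω] (μ : Measure Ω) [IsProbabilityMeasure μ]
    (σ2 D1 D2 D3 s0 s1 s2 : ℝ)
    (hσ : 0 < σ2)
    (hD3pos : 0 < D3) (hD3leD1 : D3 ≤ D1) (hD1 : D1 < σ2)
    (hD3leD2 : D3 ≤ D2) (hD2 : D2 < σ2)
    (hs0 : s0 = D3 * σ2 / (σ2 - D3))
    (hs1 : s1 = D1 * σ2 / (σ2 - D1) - s0)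
    (hs2 : s2 = D2 * σ2 / (σ2 - D2) - s0)
    (a1 a2 : ℝ)
    (ha1 : a1 = (s1 + Real.sqrt s1 * Real.sqrt s2) / (s0 + s1))
    (ha2 : a2 = (s0 - Real.sqrt s1 * Real.sqrt s2) / (s0 + s1))
    (X N1 N2 : Ω → ℝ)
    (hX2 : MemLp X 2 μ) (hN12 : MemLp N1 2 μ) (hN22 : MemLp N2 2 μ)
    (hXmean : ∫ ω, X ω ∂μ = 0) (hN1mean : ∫ ω, N1 ω ∂μ = 0) (hN2mean : ∫ ω, N2 ω ∂μ = 0)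
    (hXvar : ∫ ω, (X ω) ^ 2 ∂μ = σ2)
    (hN1var : ∫ ω, (N1 ω) ^ 2 ∂μ = s0 + s1)
    (hN2var : ∫ ω, (N2 ω) ^ 2 ∂μ
      = s0 * (Real.sqrt s1 + Real.sqrt s2) ^ 2 / (s0 + s1))
    -- `X, N1, N2` are mutually independent
    (hIndep1 : IndepFun X N1 μ)
    (hIndep2 : IndepFun (fun ω => (X ω, N1 ω)) N2 μ)
    (W1 W2 : Ω → ℝ)
    (hW1 : W1 = fun ω => X ω + N1 ω)
    (hW2 : W2 = fun ω => a1 * X ω + a2 * W1 ω + N2 ω) :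
    (∫ ω, W1 ω ∂μ = 0) ∧ (∫ ω, W2 ω ∂μ = 0) ∧
    (∫ ω, X ω * W1 ω ∂μ = σ2) ∧ (∫ ω, X ω * W2 ω ∂μ = σ2) ∧
    (∫ ω, (W1 ω) ^ 2 ∂μ = σ2 + s0 + s1) ∧
    (∫ ω, (W2 ω) ^ 2 ∂μ = σ2 + s0 + s2) ∧
    (∫ ω, W1 ω * W2 ω ∂μ = σ2 + s0 - Real.sqrt s1 * Real.sqrt s2) := by
  -- positivity facts
  have hσD3 : 0 < σ2 - D3 := by linarith
  have hσD1 : 0 < σ2 - D1 := by linarith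
  have hσD2 : 0 < σ2 - D2 := by linarith
  have hs0pos : 0 < s0 := by
    rw [hs0]; positivity
  have hs1nonneg : 0 ≤ s1 := by
    rw [hs1, hs0, sub_nonneg, div_le_div_iff₀ hσD3 hσD1]
    nlinarith [mul_nonneg (mul_nonneg hσ.le hσ.le) (sub_nonneg.2 hD3leD1)]
  have hs2nonneg : 0 ≤ s2 := by
    rw [hs2, hs0, sub_nonneg, div_le_div_iff₀ hσD3 hσD2]
    nlinarith [mul_nonneg (mul_nonneg hσ.le hσ.le) (sub_nonneg.2 hD3leD2)]
  have hss : s0 + s1 ≠ 0 := by positivity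
  have hsq1 : Real.sqrt s1 ^ 2 = s1 := Real.sq_sqrt hs1nonneg
  have hsq2 : Real.sqrt s2 ^ 2 = s2 := Real.sq_sqrt hs2nonneg
  set c : ℝ := Real.sqrt s1 * Real.sqrt s2 with hc
  have hc2 : c ^ 2 = s1 * s2 := by rw [hc, mul_pow, hsq1, hsq2]
  have ha12 : a1 + a2 = 1 := by
    rw [ha1, ha2, ← add_div, div_eq_one_iff_eq hss]; ring
  -- independence consequences
  have hXN2 : IndepFun X N2 μ := hIndep2.comp measurable_fst measurable_id
  have hN1N2 : IndepFun N1 N2 μ := hIndep2.comp measurable_snd measurable_id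
  -- integrability
  have iX : Integrable X μ := hX2.integrable one_le_two
  have iN1 : Integrable N1 μ := hN12.integrable one_le_two
  have iN2 : Integrable N2 μ := hN22.integrable one_le_two
  have iXX : Integrable (fun ω => X ω ^ 2) μ := hX2.integrable_sq
  have iN1N1 : Integrable (fun ω => N1 ω ^ 2) μ := hN12.integrable_sq
  have iN2N2 : Integrable (fun ω => N2 ω ^ 2) μ := hN22.integrable_sq
  have iXN1 : Integrable (fun ω => X ω * N1 ω) μ := hIndep1.integrable_mul iX iN1
  have iXN2 : Integrable (fun ω => X ω * N2 ω) μ := hXN2.integrable_mul iX iN2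
  have iN1N2 : Integrable (fun ω => N1 ω * N2 ω) μ := hN1N2.integrable_mul iN1 iN2
  -- zero cross-moments
  have vXN1 : ∫ ω, X ω * N1 ω ∂μ = 0 := by
    rw [hIndep1.integral_fun_mul_eq_mul_integral hX2.aestronglyMeasurable hN12.aestronglyMeasurable,
      hXmean, zero_mul]
  have vXN2 : ∫ ω, X ω * N2 ω ∂μ = 0 := by
    rw [hXN2.integral_fun_mul_eq_mul_integral hX2.aestronglyMeasurable hN22.aestronglyMeasurable,
      hXmean, zero_mul]
  have vN1N2 : ∫ ω, N1 ω * N2 ω ∂μ = 0 := by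
    rw [hN1N2.integral_fun_mul_eq_mul_integral hN12.aestronglyMeasurable hN22.aestronglyMeasurable,
      hN1mean, zero_mul]
  -- simplified form of W2
  have hW2' : W2 = fun ω => X ω + a2 * N1 ω + N2 ω := by
    funext ω
    rw [hW2, hW1]
    simp only
    have : a1 = 1 - a2 := by linarith
    rw [this]; ring
  subst hW1
  -- key value of a2 * (s0 + s1)
  have ha2v : a2 * (s0 + s1) = s0 - c := by
    rw [ha2, div_mul_cancel₀ _ hss]
  refine ⟨?_, ?_, ?_, ?_, ?_, ?_, ?_⟩
  · -- E[W1] = 0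
    have e1 : ∫ ω, X ω + N1 ω ∂μ = (∫ ω, X ω ∂μ) + ∫ ω, N1 ω ∂μ := integral_add iX iN1
    simp only [e1, hXmean, hN1mean, add_zero]
  · -- E[W2] = 0
    have e1 : ∫ ω, X ω + a2 * N1 ω + N2 ω ∂μ
        = (∫ ω, X ω + a2 * N1 ω ∂μ) + ∫ ω, N2 ω ∂μ :=
      integral_add (iX.add (iN1.const_mul a2)) iN2
    have e2 : ∫ ω, X ω + a2 * N1 ω ∂μ = (∫ ω, X ω ∂μ) + ∫ ω, a2 * N1 ω ∂μ :=
      integral_add iX (iN1.const_mul a2)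
    have e3 : ∫ ω, a2 * N1 ω ∂μ = a2 * ∫ ω, N1 ω ∂μ := integral_const_mul _ _
    simp only [hW2', e1, e2, e3, hXmean, hN1mean, hN2mean, mul_zero, add_zero]
  · -- E[X·W1] = σ2
    have h : (fun ω => X ω * (X ω + N1 ω)) = fun ω => X ω ^ 2 + X ω * N1 ω := by
      funext ω; ring
    have e1 : ∫ ω, X ω ^ 2 + X ω * N1 ω ∂μ
        = (∫ ω, X ω ^ 2 ∂μ) + ∫ ω, X ω * N1 ω ∂μ := integral_add iXX iXN1
    simp only [h, e1, hXvar, vXN1, add_zero]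
  · -- E[X·W2] = σ2
    have h : (fun ω => X ω * W2 ω)
        = fun ω => X ω ^ 2 + a2 * (X ω * N1 ω) + X ω * N2 ω := by
      funext ω; rw [hW2']; ring
    have e1 : ∫ ω, X ω ^ 2 + a2 * (X ω * N1 ω) + X ω * N2 ω ∂μ
        = (∫ ω, X ω ^ 2 + a2 * (X ω * N1 ω) ∂μ) + ∫ ω, X ω * N2 ω ∂μ :=
      integral_add (iXX.add (iXN1.const_mul a2)) iXN2
    have e2 : ∫ ω, X ω ^ 2 + a2 * (X ω * N1 ω) ∂μ
        = (∫ ω, X ω ^ 2 ∂μ) + ∫ ω, a2 * (X ω * N1 ω) ∂μ :=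
      integral_add iXX (iXN1.const_mul a2)
    have e3 : ∫ ω, a2 * (X ω * N1 ω) ∂μ = a2 * ∫ ω, X ω * N1 ω ∂μ := integral_const_mul _ _
    simp only [h, e1, e2, e3, hXvar, vXN1, vXN2, mul_zero, add_zero]
  · -- E[W1²]
    have h : (fun ω => (X ω + N1 ω) ^ 2)
        = fun ω => X ω ^ 2 + 2 * (X ω * N1 ω) + N1 ω ^ 2 := by
      funext ω; ring
    have e1 : ∫ ω, X ω ^ 2 + 2 * (X ω * N1 ω) + N1 ω ^ 2 ∂μ
        = (∫ ω, X ω ^ 2 + 2 * (X ω * N1 ω) ∂μ) + ∫ ω, N1 ω ^ 2 ∂μ :=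
      integral_add (iXX.add (iXN1.const_mul 2)) iN1N1
    have e2 : ∫ ω, X ω ^ 2 + 2 * (X ω * N1 ω) ∂μ
        = (∫ ω, X ω ^ 2 ∂μ) + ∫ ω, 2 * (X ω * N1 ω) ∂μ :=
      integral_add iXX (iXN1.const_mul 2)
    have e3 : ∫ ω, 2 * (X ω * N1 ω) ∂μ = 2 * ∫ ω, X ω * N1 ω ∂μ := integral_const_mul _ _
    simp only [h, e1, e2, e3, hXvar, hN1var, vXN1, mul_zero, add_zero]
    ring
  · -- E[W2²]
    have h : (fun ω => (W2 ω) ^ 2)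
        = fun ω => (X ω ^ 2 + a2 ^ 2 * N1 ω ^ 2 + N2 ω ^ 2)
          + ((2 * a2) * (X ω * N1 ω) + 2 * (X ω * N2 ω) + (2 * a2) * (N1 ω * N2 ω)) := by
      funext ω; rw [hW2']; ring
    have e1 : ∫ ω, (X ω ^ 2 + a2 ^ 2 * N1 ω ^ 2 + N2 ω ^ 2)
          + ((2 * a2) * (X ω * N1 ω) + 2 * (X ω * N2 ω) + (2 * a2) * (N1 ω * N2 ω)) ∂μ
        = (∫ ω, X ω ^ 2 + a2 ^ 2 * N1 ω ^ 2 + N2 ω ^ 2 ∂μ)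
          + ∫ ω, (2 * a2) * (X ω * N1 ω) + 2 * (X ω * N2 ω)
            + (2 * a2) * (N1 ω * N2 ω) ∂μ :=
      integral_add ((iXX.add (iN1N1.const_mul _)).add iN2N2)
        (((iXN1.const_mul _).add (iXN2.const_mul _)).add (iN1N2.const_mul _))
    have e2 : ∫ ω, X ω ^ 2 + a2 ^ 2 * N1 ω ^ 2 + N2 ω ^ 2 ∂μ
        = (∫ ω, X ω ^ 2 + a2 ^ 2 * N1 ω ^ 2 ∂μ) + ∫ ω, N2 ω ^ 2 ∂μ :=
      integral_add (iXX.add (iN1N1.const_mul _)) iN2N2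
    have e3 : ∫ ω, X ω ^ 2 + a2 ^ 2 * N1 ω ^ 2 ∂μ
        = (∫ ω, X ω ^ 2 ∂μ) + ∫ ω, a2 ^ 2 * N1 ω ^ 2 ∂μ :=
      integral_add iXX (iN1N1.const_mul _)
    have e4 : ∫ ω, a2 ^ 2 * N1 ω ^ 2 ∂μ = a2 ^ 2 * ∫ ω, N1 ω ^ 2 ∂μ :=
      integral_const_mul _ _
    have e5 : ∫ ω, (2 * a2) * (X ω * N1 ω) + 2 * (X ω * N2 ω)
          + (2 * a2) * (N1 ω * N2 ω) ∂μ
        = (∫ ω, (2 * a2) * (X ω * N1 ω) + 2 * (X ω * N2 ω) ∂μ)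
          + ∫ ω, (2 * a2) * (N1 ω * N2 ω) ∂μ :=
      integral_add ((iXN1.const_mul _).add (iXN2.const_mul _)) (iN1N2.const_mul _)
    have e6 : ∫ ω, (2 * a2) * (X ω * N1 ω) + 2 * (X ω * N2 ω) ∂μ
        = (∫ ω, (2 * a2) * (X ω * N1 ω) ∂μ) + ∫ ω, 2 * (X ω * N2 ω) ∂μ :=
      integral_add (iXN1.const_mul _) (iXN2.const_mul _)
    have e7 : ∫ ω, (2 * a2) * (X ω * N1 ω) ∂μ = (2 * a2) * ∫ ω, X ω * N1 ω ∂μ :=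
      integral_const_mul _ _
    have e8 : ∫ ω, 2 * (X ω * N2 ω) ∂μ = 2 * ∫ ω, X ω * N2 ω ∂μ := integral_const_mul _ _
    have e9 : ∫ ω, (2 * a2) * (N1 ω * N2 ω) ∂μ = (2 * a2) * ∫ ω, N1 ω * N2 ω ∂μ :=
      integral_const_mul _ _
    have key : a2 ^ 2 * (s0 + s1) + s0 * (Real.sqrt s1 + Real.sqrt s2) ^ 2 / (s0 + s1)
        = s0 + s2 := by
      have expand : (Real.sqrt s1 + Real.sqrt s2) ^ 2 = s1 + s2 + 2 * c := by
        rw [hc]; linear_combination hsq1 + hsq2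
      rw [expand]
      have h2 : s0 * (s1 + s2 + 2 * c) / (s0 + s1) = s0 + s2 - a2 ^ 2 * (s0 + s1) := by
        rw [div_eq_iff hss]
        linear_combination (a2 * (s0 + s1) + (s0 - c)) * ha2v + hc2
      rw [h2]; ring
    simp only [h, e1, e2, e3, e4, e5, e6, e7, e8, e9, hXvar, hN1var, hN2var,
      vXN1, vXN2, vN1N2, mul_zero, add_zero]
    linarith [key]
  · -- E[W1·W2]
    have h : (fun ω => (X ω + N1 ω) * W2 ω)
        = fun ω => (X ω ^ 2 + a2 * N1 ω ^ 2)
          + ((1 + a2) * (X ω * N1 ω) + (X ω * N2 ω) + (N1 ω * N2 ω)) := by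
      funext ω; rw [hW2']; ring
    have e1 : ∫ ω, (X ω ^ 2 + a2 * N1 ω ^ 2)
          + ((1 + a2) * (X ω * N1 ω) + (X ω * N2 ω) + (N1 ω * N2 ω)) ∂μ
        = (∫ ω, X ω ^ 2 + a2 * N1 ω ^ 2 ∂μ)
          + ∫ ω, (1 + a2) * (X ω * N1 ω) + (X ω * N2 ω) + (N1 ω * N2 ω) ∂μ :=
      integral_add (iXX.add (iN1N1.const_mul _))
        (((iXN1.const_mul _).add iXN2).add iN1N2)
    have e2 : ∫ ω, X ω ^ 2 + a2 * N1 ω ^ 2 ∂μ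
        = (∫ ω, X ω ^ 2 ∂μ) + ∫ ω, a2 * N1 ω ^ 2 ∂μ :=
      integral_add iXX (iN1N1.const_mul _)
    have e3 : ∫ ω, a2 * N1 ω ^ 2 ∂μ = a2 * ∫ ω, N1 ω ^ 2 ∂μ := integral_const_mul _ _
    have e4 : ∫ ω, (1 + a2) * (X ω * N1 ω) + (X ω * N2 ω) + (N1 ω * N2 ω) ∂μ
        = (∫ ω, (1 + a2) * (X ω * N1 ω) + (X ω * N2 ω) ∂μ) + ∫ ω, N1 ω * N2 ω ∂μ :=
      integral_add ((iXN1.const_mul _).add iXN2) iN1N2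
    have e5 : ∫ ω, (1 + a2) * (X ω * N1 ω) + (X ω * N2 ω) ∂μ
        = (∫ ω, (1 + a2) * (X ω * N1 ω) ∂μ) + ∫ ω, X ω * N2 ω ∂μ :=
      integral_add (iXN1.const_mul _) iXN2
    have e6 : ∫ ω, (1 + a2) * (X ω * N1 ω) ∂μ = (1 + a2) * ∫ ω, X ω * N1 ω ∂μ :=
      integral_const_mul _ _
    simp only [h, e1, e2, e3, e4, e5, e6, hXvar, hN1var, vXN1, vXN2, vN1N2,
      mul_zero, add_zero]
    linarith [ha2v]
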